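/- Let p ∈ [1,∞] and suppose the difference-delay system is L^p exponentially stable with constants C₀ > 0, γ > 0, i.e. every solution z with initial condition φ ∈ L^p([−η_M,0],ℝ^d) satisfies ‖z(t+·)‖_{L^p([−η_M,0],ℝ^d)} ≤ C₀ e^{−γ t} ‖φ‖_{L^p([−η_M,0],ℝ^d)} for all t ≥ 0. Let (M_q)_{q≥1} be any family of maps in L^∞_loc(ℝ,ℝ^{d×d}) such that M_q(t) = 0 for t ∉ (σ_q − η_M, σ_q] and such that for every φ ∈ L^p([−η_M,0],ℝ^d) the corresponding solution satisfies z(t) = Σ_{q=1}^∞ M_q(t) φ(t − σ_q) for a.e. t ≥ 0. Then for every q ≥ 1, the spectral norm satisfies ‖M_q(s)‖ ≤ C₀ e^{−γ s} for a.e. s > 0. -/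

import Mathlib

open MeasureTheory Matrix Filter Set
open scoped ENNReal

/-- Euclidean norm of a vector in `ℝ^ι`. -/
noncomputable def euclNorm {ι : Type*} [Fintype ι] (x : ι → ℝ) : ℝ :=
  Real.sqrt (∑ j, (x j) ^ 2)

/-- `z` belongs to `L^p_loc([-ηM, ∞), ℝ^d)` and satisfies the time-varying difference-delay
system `z(t) = ∑ i, D i (t) * z (t - η i)` for a.e. `t ≥ 0` (`ηM` is the largest delay;
the values of `z` on `[-ηM, 0]` are its initial condition). -/
def DelaySol (d M : ℕ) (η : Fin M → ℝ) (D : Fin M → ℝ → Matrix (Fin d) (Fin d) ℝ)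
    (ηM : ℝ) (p : ℝ≥0∞) (z : ℝ → Fin d → ℝ) : Prop :=
  (∀ b : ℝ, MemLp z p (volume.restrict (Set.Icc (-ηM) b))) ∧
  (∀ᵐ t ∂(volume.restrict (Set.Ici (0 : ℝ))), z t = ∑ i, (D i t).mulVec (z (t - η i)))

/-- `L^p` exponential stability of the difference-delay system. -/
def DelayLpStable (d M : ℕ) (η : Fin M → ℝ) (D : Fin M → ℝ → Matrix (Fin d) (Fin d) ℝ)
    (ηM : ℝ) (p : ℝ≥0∞) : Prop :=
  ∃ C > (0 : ℝ), ∃ γ > (0 : ℝ), ∀ z, DelaySol d M η D ηM p z → ∀ t ≥ (0 : ℝ),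
    eLpNorm (fun θ => euclNorm (z (t + θ))) p (volume.restrict (Set.Icc (-ηM) 0)) ≤
      ENNReal.ofReal (C * Real.exp (-γ * t)) *
        eLpNorm (fun θ => euclNorm (z θ)) p (volume.restrict (Set.Icc (-ηM) 0))

/-- `C⁰` exponential stability of the difference-delay system: continuous solutions
(the equation holding for all `t ≥ 0` forces the compatibility condition at `t = 0`). -/
def DelayC0Stable (d M : ℕ) (η : Fin M → ℝ) (D : Fin M → ℝ → Matrix (Fin d) (Fin d) ℝ)
    (ηM : ℝ) : Prop :=
  ∃ C > (0 : ℝ), ∃ γ > (0 : ℝ), ∀ z : ℝ → Fin d → ℝ,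
    ContinuousOn z (Set.Ici (-ηM)) →
    (∀ t ≥ (0 : ℝ), z t = ∑ i, (D i t).mulVec (z (t - η i))) →
    ∀ t ≥ (0 : ℝ), ∀ θ ∈ Set.Icc (-ηM) (0 : ℝ),
      euclNorm (z (t + θ)) ≤ C * Real.exp (-γ * t) *
        ⨆ θ' : Set.Icc (-ηM) (0 : ℝ), euclNorm (z (θ' : ℝ))

/-- Spectral norm of a real matrix: the operator norm with respect to the Euclidean norm. -/
noncomputable def specNorm {ι : Type*} [Fintype ι] [DecidableEq ι] (B : Matrix ι ι ℝ) : ℝ :=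
  ‖Matrix.toEuclideanCLM (𝕜 := ℝ) B‖


section EuclAux

variable {ι : Type*} [Fintype ι]

lemma euclNorm_eq_norm (x : ι → ℝ) :
    euclNorm x = ‖(WithLp.equiv 2 (ι → ℝ)).symm x‖ := by
  rw [EuclideanSpace.norm_eq]
  simp [euclNorm, Real.norm_eq_abs, sq_abs]

lemma euclNorm_nonneg (x : ι → ℝ) : 0 ≤ euclNorm x := Real.sqrt_nonneg _

lemma euclNorm_zero : euclNorm (0 : ι → ℝ) = 0 := by simp [euclNorm]

lemma euclNorm_sum_le {κ : Type*} (s : Finset κ) (f : κ → ι → ℝ) :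
    euclNorm (∑ i ∈ s, f i) ≤ ∑ i ∈ s, euclNorm (f i) := by
  simp only [euclNorm_eq_norm]
  have : (WithLp.equiv 2 (ι → ℝ)).symm (∑ i ∈ s, f i)
      = ∑ i ∈ s, (WithLp.equiv 2 (ι → ℝ)).symm (f i) := WithLp.toLp_sum _ _ s f
  rw [this]
  exact norm_sum_le _ _

lemma abs_le_euclNorm (x : ι → ℝ) (j : ι) : |x j| ≤ euclNorm x := by
  rw [euclNorm, ← Real.sqrt_sq_eq_abs]
  exact Real.sqrt_le_sqrt (Finset.single_le_sum (f := fun i => x i ^ 2)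
    (fun i _ => sq_nonneg _) (Finset.mem_univ j))

lemma euclNorm_le_card_mul (x : ι → ℝ) {c : ℝ} (hc : 0 ≤ c) (h : ∀ j, |x j| ≤ c) :
    euclNorm x ≤ (Fintype.card ι : ℝ) * c := by
  have h1 : euclNorm x ≤ Real.sqrt ((Fintype.card ι : ℝ) * c ^ 2) := by
    rw [euclNorm]
    apply Real.sqrt_le_sqrt
    calc ∑ j, x j ^ 2 ≤ ∑ _j : ι, c ^ 2 := by
          apply Finset.sum_le_sum
          intro j _
          rw [← sq_abs]
          exact pow_le_pow_left₀ (abs_nonneg _) (h j) 2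
      _ = (Fintype.card ι : ℝ) * c ^ 2 := by simp [Finset.card_univ, mul_comm]
  refine h1.trans ?_
  rw [Real.sqrt_mul (by positivity), Real.sqrt_sq hc]
  gcongr
  calc Real.sqrt (Fintype.card ι : ℝ) ≤ Real.sqrt ((Fintype.card ι : ℝ) ^ 2) := by
        apply Real.sqrt_le_sqrt
        exact_mod_cast Nat.le_self_pow two_ne_zero _
    _ = (Fintype.card ι : ℝ) := Real.sqrt_sq (by positivity)

lemma euclNorm_mulVec_le [DecidableEq ι] (A : Matrix ι ι ℝ) (v : ι → ℝ) {B : ℝ} (hB : 0 ≤ B)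
    (hA : ∀ k l, |A k l| ≤ B) :
    euclNorm (A.mulVec v) ≤ (Fintype.card ι : ℝ) ^ 2 * B * euclNorm v := by
  have hcomp : ∀ k, |A.mulVec v k| ≤ (Fintype.card ι : ℝ) * B * euclNorm v := by
    intro k
    rw [Matrix.mulVec, dotProduct]
    calc |∑ l, A k l * v l| ≤ ∑ l, |A k l * v l| := Finset.abs_sum_le_sum_abs _ _
      _ ≤ ∑ _l : ι, B * euclNorm v := by
          apply Finset.sum_le_sum
          intro l _
          rw [abs_mul]
          exact mul_le_mul (hA k l) (abs_le_euclNorm v l) (abs_nonneg _) hB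
      _ = (Fintype.card ι : ℝ) * B * euclNorm v := by
          simp [Finset.card_univ]; ring
  have := euclNorm_le_card_mul (A.mulVec v)
    (c := (Fintype.card ι : ℝ) * B * euclNorm v) (mul_nonneg (mul_nonneg (by positivity) hB) (euclNorm_nonneg v)) hcomp
  calc euclNorm (A.mulVec v) ≤ (Fintype.card ι : ℝ) * ((Fintype.card ι : ℝ) * B * euclNorm v) :=
        this
    _ = (Fintype.card ι : ℝ) ^ 2 * B * euclNorm v := by ring

lemma pi_norm_le_euclNorm (x : ι → ℝ) : ‖x‖ ≤ euclNorm x := by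
  refine (pi_norm_le_iff_of_nonneg (euclNorm_nonneg x)).2 fun j => ?_
  rw [Real.norm_eq_abs]
  exact abs_le_euclNorm x j

lemma specNorm_zero [DecidableEq ι] : specNorm (0 : Matrix ι ι ℝ) = 0 := by
  rw [specNorm, map_zero, norm_zero]

lemma specNorm_le_of_bound [DecidableEq ι] {A : Matrix ι ι ℝ} {c : ℝ} (hc : 0 ≤ c)
    (h : ∀ v : ι → ℝ, euclNorm (A.mulVec v) ≤ c * euclNorm v) : specNorm A ≤ c := by
  refine ContinuousLinearMap.opNorm_le_bound _ hc fun x => ?_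
  have hx : x = (WithLp.equiv 2 (ι → ℝ)).symm ((WithLp.equiv 2 (ι → ℝ)) x) := by simp
  rw [hx]
  have h' := h ((WithLp.equiv 2 (ι → ℝ)) x)
  rw [euclNorm_eq_norm, euclNorm_eq_norm] at h'
  exact h'

lemma measurable_euclNorm {α : Type*} [MeasurableSpace α] {f : α → ι → ℝ}
    (hf : ∀ j, Measurable fun a => f a j) : Measurable fun a => euclNorm (f a) := by
  apply Real.continuous_sqrt.measurable.comp
  exact Finset.measurable_sum _ fun j _ => (hf j).pow_const 2

lemma continuous_euclNorm : Continuous fun v : ι → ℝ => euclNorm v := by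
  apply Real.continuous_sqrt.comp
  exact continuous_finset_sum _ fun j _ => (continuous_apply j).pow 2

end EuclAux

section SolAux

variable {d M : ℕ} (η : Fin M → ℝ) (D : Fin M → ℝ → Matrix (Fin d) (Fin d) ℝ)
  (φ : ℝ → Fin d → ℝ)

noncomputable def solAux : ℕ → ℝ → Fin d → ℝ
  | 0, t => if t ≤ 0 then φ t else 0
  | n + 1, t => if t ≤ 0 then φ t else ∑ i, (D i t).mulVec (solAux n (t - η i))

noncomputable def zAux (e : ℝ) (t : ℝ) : Fin d → ℝ := solAux η D φ (⌈t / e⌉₊ + 1) t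

variable {η D φ}
variable {e : ℝ} (he : 0 < e) (heη : ∀ i, e ≤ η i)

lemma solAux_nonpos (n : ℕ) {t : ℝ} (ht : t ≤ 0) : solAux η D φ n t = φ t := by
  cases n <;> simp [solAux, ht]

include he heη in
lemma solAux_succ_eq : ∀ n : ℕ, ∀ t : ℝ, t ≤ n * e →
    solAux η D φ (n + 1) t = solAux η D φ n t := by
  intro n
  induction n with
  | zero =>
    intro t ht
    norm_num at ht
    rw [solAux_nonpos _ ht, solAux_nonpos _ ht]
  | succ n ih =>
    intro t ht
    by_cases h : t ≤ 0
    · rw [solAux_nonpos _ h, solAux_nonpos _ h]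
    · show (if t ≤ 0 then φ t else ∑ i, (D i t).mulVec (solAux η D φ (n + 1) (t - η i)))
        = (if t ≤ 0 then φ t else ∑ i, (D i t).mulVec (solAux η D φ n (t - η i)))
      rw [if_neg h, if_neg h]
      refine Finset.sum_congr rfl fun i _ => ?_
      rw [ih (t - η i) (by push_cast at ht ⊢; nlinarith [heη i])]

include he heη in
lemma solAux_eq_of_le {n m : ℕ} (hnm : n ≤ m) {t : ℝ} (ht : t ≤ n * e) :
    solAux η D φ m t = solAux η D φ n t := by
  induction m, hnm using Nat.le_induction with
  | base => rfl
  | succ m hm ih =>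
    rw [solAux_succ_eq he heη m t (ht.trans (by
      have : (n : ℝ) ≤ m := by exact_mod_cast hm
      nlinarith)), ih]

include he in
lemma le_ceil_mul (t : ℝ) : t ≤ (⌈t / e⌉₊ : ℝ) * e := by
  rcases le_or_gt t 0 with h | h
  · exact h.trans (by positivity)
  · rw [← div_le_iff₀ he]
    exact Nat.le_ceil _

include he heη in
lemma zAux_eq {n : ℕ} {t : ℝ} (ht : t ≤ n * e) : zAux η D φ e t = solAux η D φ n t := by
  unfold zAux
  have ha : t ≤ (⌈t / e⌉₊ : ℝ) * e := le_ceil_mul he t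
  rcases le_total (⌈t / e⌉₊) n with h | h
  · rw [solAux_succ_eq he heη _ t ha, solAux_eq_of_le he heη h ha]
  · exact solAux_eq_of_le he heη (Nat.le_succ_of_le h) ht

lemma zAux_nonpos {t : ℝ} (ht : t ≤ 0) : zAux η D φ e t = φ t := solAux_nonpos _ ht

include he heη in
lemma zAux_spec {t : ℝ} (ht : 0 < t) :
    zAux η D φ e t = ∑ i, (D i t).mulVec (zAux η D φ e (t - η i)) := by
  have key : zAux η D φ e t = solAux η D φ (⌈t / e⌉₊ + 1) t := rfl
  rw [key]
  show (if t ≤ 0 then φ t else ∑ i, (D i t).mulVec (solAux η D φ (⌈t / e⌉₊) (t - η i))) = _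
  rw [if_neg (not_le.2 ht)]
  refine Finset.sum_congr rfl fun i _ => ?_
  congr 1
  have hti : t - η i ≤ (⌈(t - η i) / e⌉₊ : ℝ) * e := le_ceil_mul he _
  have hle : ⌈(t - η i) / e⌉₊ ≤ ⌈t / e⌉₊ := by
    apply Nat.ceil_le_ceil
    gcongr
    linarith [heη i, he]
  rw [zAux_eq he heη (n := ⌈(t - η i) / e⌉₊) hti]
  rw [solAux_eq_of_le he heη hle hti]

end SolAux

section SolAux2

variable {d M : ℕ} {η : Fin M → ℝ} {D : Fin M → ℝ → Matrix (Fin d) (Fin d) ℝ}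
  {φ : ℝ → Fin d → ℝ}

lemma solAux_measurable (hφ : Measurable φ)
    (hD : ∀ i k l, Measurable fun t => D i t k l) (n : ℕ) :
    Measurable (solAux η D φ n) := by
  induction n with
  | zero => exact Measurable.ite measurableSet_Iic hφ measurable_const
  | succ n ih =>
    refine Measurable.ite measurableSet_Iic hφ ?_
    refine measurable_pi_iff.2 fun k => ?_
    have heq : (fun t => (∑ i, (D i t).mulVec (solAux η D φ n (t - η i))) k)
        = fun t => ∑ i, ∑ l, D i t k l * solAux η D φ n (t - η i) l := by
      funext t
      simp [Matrix.mulVec, dotProduct, Finset.sum_apply]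
    show Measurable (fun t => (∑ i, (D i t).mulVec (solAux η D φ n (t - η i))) k)
    rw [heq]
    refine Finset.measurable_sum _ fun i _ => Finset.measurable_sum _ fun l _ => ?_
    exact (hD i k l).mul ((measurable_pi_apply l).comp
      (ih.comp (measurable_id.sub measurable_const)))

lemma ae_sub_const {P : ℝ → Prop} (c : ℝ) (h : ∀ᵐ t ∂(volume : Measure ℝ), P t) :
    ∀ᵐ t ∂(volume : Measure ℝ), P (t - c) := by
  have := (measurePreserving_add_right (volume : Measure ℝ)
    (-c)).quasiMeasurePreserving.tendsto_ae.eventually h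
  simpa [sub_eq_add_neg] using this

lemma solAux_bound {K B : ℝ} (hK : 0 ≤ K) (hφK : ∀ t, euclNorm (φ t) ≤ K) (hB : 0 ≤ B)
    (hDB : ∀ᵐ t ∂(volume : Measure ℝ), t ∈ Ici (0 : ℝ) → ∀ i k l, |D i t k l| ≤ B) (n : ℕ) :
    ∀ᵐ t ∂(volume : Measure ℝ),
      euclNorm (solAux η D φ n t) ≤ K * (1 + M * d ^ 2 * B) ^ n := by
  set C : ℝ := 1 + M * d ^ 2 * B with hC
  have hC1 : 1 ≤ C := by
    have h0 : (0 : ℝ) ≤ M * d ^ 2 * B := by positivity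
    rw [hC]; linarith
  induction n with
  | zero =>
    filter_upwards with t
    by_cases h : t ≤ 0
    · simpa [solAux, h] using hφK t
    · simp [solAux, h, euclNorm_zero, hK]
  | succ n ih =>
    have ihs : ∀ᵐ t ∂(volume : Measure ℝ), ∀ i : Fin M,
        euclNorm (solAux η D φ n (t - η i)) ≤ K * C ^ n :=
      ae_all_iff.2 fun i => ae_sub_const (η i) ih
    filter_upwards [ihs, hDB] with t hih hDt
    by_cases h : t ≤ 0
    · rw [solAux_nonpos _ h]
      calc euclNorm (φ t) ≤ K := hφK t
        _ ≤ K * C ^ (n + 1) := le_mul_of_one_le_right hK (one_le_pow₀ hC1)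
    · show euclNorm (if t ≤ 0 then φ t else ∑ i, (D i t).mulVec (solAux η D φ n (t - η i))) ≤ _
      rw [if_neg h]
      have hKC : (0 : ℝ) ≤ K * C ^ n := by positivity
      calc euclNorm (∑ i, (D i t).mulVec (solAux η D φ n (t - η i)))
          ≤ ∑ i, euclNorm ((D i t).mulVec (solAux η D φ n (t - η i))) :=
            euclNorm_sum_le _ _
        _ ≤ ∑ _i : Fin M, (d : ℝ) ^ 2 * B * (K * C ^ n) := by
            refine Finset.sum_le_sum fun i _ => ?_
            have h1 := euclNorm_mulVec_le (D i t) (solAux η D φ n (t - η i)) hB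
              (hDt (le_of_lt (not_le.1 h)) i)
            rw [Fintype.card_fin] at h1
            refine h1.trans ?_
            exact mul_le_mul_of_nonneg_left (hih i) (by positivity)
        _ = (M : ℝ) * ((d : ℝ) ^ 2 * B * (K * C ^ n)) := by
            rw [Finset.sum_const, Finset.card_univ, Fintype.card_fin, nsmul_eq_mul]
        _ ≤ K * C ^ (n + 1) := by
            have h0 : (0 : ℝ) ≤ K * C ^ n := by positivity
            have h1 : K * C ^ (n + 1) = K * C ^ n + K * C ^ n * (M * d ^ 2 * B) := by
              rw [pow_succ, hC]; ring
            have h2 : (M : ℝ) * ((d : ℝ) ^ 2 * B * (K * C ^ n))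
                = K * C ^ n * (M * d ^ 2 * B) := by ring
            rw [h1, h2]
            linarith

end SolAux2

set_option maxHeartbeats 2000000 in
/-- If the difference-delay system is `L^p` exponentially stable with
constants `C₀, γ` and `(Mq q)` is a family of `L^∞_loc` kernels supported in
`(σ q − ηM, σ q]` representing all solutions, then `‖Mq q s‖ ≤ C₀ e^{−γ s}` for a.e.
`s > 0`, where `‖·‖` is the spectral norm. -/
theorem delay_kernel_exponential_decay
    (d M : ℕ) (hd : 1 ≤ d) (hM : 1 ≤ M)
    (η : Fin M → ℝ) (hηpos : ∀ i, 0 < η i) (hηmono : Monotone η)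
    (D : Fin M → ℝ → Matrix (Fin d) (Fin d) ℝ)
    (hDmeas : ∀ i k l, Measurable fun t => D i t k l)
    (hDbdd : ∀ i, ∃ B : ℝ, ∀ᵐ t ∂(volume.restrict (Set.Ici (0 : ℝ))), ∀ k l, |D i t k l| ≤ B)
    (ηM : ℝ) (hηM : ηM = η ⟨M - 1, by omega⟩)
    (σ : ℕ → ℝ) (hσ0 : σ 0 = 0) (hσmono : StrictMono σ)
    (hσrange : Set.range σ = {s : ℝ | ∃ q : Fin M → ℕ, s = ∑ i, (q i : ℝ) * η i})
    (p : ℝ≥0∞) (hp : 1 ≤ p)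
    (C₀ γ : ℝ) (hC₀ : 0 < C₀) (hγ : 0 < γ)
    -- `L^p` exponential stability with constants `C₀`, `γ`
    (hstab : ∀ z, DelaySol d M η D ηM p z → ∀ t ≥ (0 : ℝ),
      eLpNorm (fun θ => euclNorm (z (t + θ))) p (volume.restrict (Set.Icc (-ηM) 0)) ≤
        ENNReal.ofReal (C₀ * Real.exp (-γ * t)) *
          eLpNorm (fun θ => euclNorm (z θ)) p (volume.restrict (Set.Icc (-ηM) 0)))
    (Mq : ℕ → ℝ → Matrix (Fin d) (Fin d) ℝ)
    (hMqloc : ∀ q, (∀ k l, Measurable fun t => Mq q t k l) ∧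
      ∀ r : ℝ, ∃ B : ℝ, ∀ᵐ t ∂(volume.restrict (Set.Icc (-r) r)), ∀ k l, |Mq q t k l| ≤ B)
    (hMqsupp : ∀ q t, t ∉ Set.Ioc (σ q - ηM) (σ q) → Mq q t = 0)
    (hrep : ∀ φ : ℝ → Fin d → ℝ, MemLp φ p (volume.restrict (Set.Icc (-ηM) 0)) →
      ∀ z, DelaySol d M η D ηM p z → z =ᵐ[volume.restrict (Set.Icc (-ηM) 0)] φ →
      ∀ᵐ t ∂(volume.restrict (Set.Ici (0 : ℝ))),
        z t = ∑ᶠ q : ℕ, (Mq q t).mulVec (φ (t - σ q))) :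
    ∀ q : ℕ, ∀ᵐ s ∂(volume.restrict (Set.Ioi (0 : ℝ))),
      specNorm (Mq q s) ≤ C₀ * Real.exp (-γ * s) := by
  have hηMpos : 0 < ηM := hηM ▸ hηpos _
  have hσnn : ∀ q : ℕ, 0 ≤ σ q := fun q => hσ0 ▸ hσmono.monotone (Nat.zero_le q)
  intro q
  rcases Nat.eq_zero_or_pos q with rfl | hq1
  · filter_upwards [self_mem_ae_restrict measurableSet_Ioi] with s hs
    have h0 : Mq 0 s = 0 := hMqsupp 0 s (by
      rw [hσ0]
      intro hmem
      exact absurd hmem.2 (not_le.2 hs))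
    rw [h0, specNorm_zero]
    positivity
  have hσqpos : 0 < σ q := hσ0 ▸ hσmono hq1
  set a : ℝ := max 0 (σ q - ηM) with hadef
  have ha0 : 0 ≤ a := le_max_left _ _
  have haσ : a < σ q := max_lt hσqpos (by linarith)
  set R : Set ℝ := Ioc a (σ q) with hRdef
  set gap : ℝ := min (σ (q + 1) - σ q) (σ q - σ (q - 1)) with hgapdef
  have hgappos : 0 < gap :=
    lt_min (sub_pos.2 (hσmono (Nat.lt_succ_self q))) (sub_pos.2 (hσmono (by omega)))
  have hgapsep : ∀ q' : ℕ, q' ≠ q → σ q' ≤ σ q - gap ∨ σ q + gap ≤ σ q' := by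
    intro q' hne
    rcases lt_or_gt_of_ne hne with h | h
    · left
      have h1 : σ q' ≤ σ (q - 1) := hσmono.monotone (by omega)
      have h2 : gap ≤ σ q - σ (q - 1) := min_le_right _ _
      linarith
    · right
      have h1 : σ (q + 1) ≤ σ q' := hσmono.monotone (by omega)
      have h2 : gap ≤ σ (q + 1) - σ q := min_le_left _ _
      linarith
  set e : ℝ := η ⟨0, by omega⟩ with hedef
  have he : 0 < e := hηpos _
  have heη : ∀ i, e ≤ η i := fun i => hηmono (by simp [Fin.le_def])
  have hηle : ∀ i, η i ≤ ηM := fun i => hηM ▸ hηmono (by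
    simp only [Fin.le_def]
    omega)
  -- a uniform a.e. bound on the matrices D
  have hDbdd' : ∀ i, ∃ B : ℝ, ∀ᵐ t ∂(volume : Measure ℝ),
      t ∈ Ici (0 : ℝ) → ∀ k l, |D i t k l| ≤ B :=
    fun i => (hDbdd i).imp fun B h => ae_imp_of_ae_restrict h
  choose Bf hBf using hDbdd'
  set B : ℝ := ∑ i, max (Bf i) 0 with hBdef
  have hB0 : 0 ≤ B := Finset.sum_nonneg fun i _ => le_max_right _ _
  have hDB : ∀ᵐ t ∂(volume : Measure ℝ), t ∈ Ici (0 : ℝ) → ∀ i k l, |D i t k l| ≤ B := by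
    have h1 : ∀ᵐ t ∂(volume : Measure ℝ), ∀ i,
        t ∈ Ici (0 : ℝ) → ∀ k l, |D i t k l| ≤ Bf i := ae_all_iff.2 hBf
    filter_upwards [h1] with t ht hti i k l
    refine (ht i hti k l).trans ?_
    calc Bf i ≤ max (Bf i) 0 := le_max_left _ _
      _ ≤ B := Finset.single_le_sum (f := fun i => max (Bf i) 0)
        (fun j _ => le_max_right _ _) (Finset.mem_univ i)
  set c : ℝ := C₀ * Real.exp (-γ * σ q) with hcdef
  have hcpos : 0 < c := by positivity
  have hfinIcc : IsFiniteMeasure (volume.restrict (Icc (-ηM) (0 : ℝ))) :=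
    ⟨by rw [Measure.restrict_apply_univ]; exact measure_Icc_lt_top⟩
  -- the key estimate for small sets near a point of `R`
  have key : ∀ (v : Fin d → ℝ) (s ε : ℝ), s ∈ R → 0 < ε → ε ≤ gap → ε ≤ s - a →
      ∀ E : Set ℝ, MeasurableSet E → E ⊆ Ioc (s - ε) s →
      eLpNorm (fun u => euclNorm ((Mq q u).mulVec v)) p (volume.restrict E) ≤
        ENNReal.ofReal c *
          (ENNReal.ofReal (euclNorm v) * (volume E) ^ (1 / p.toReal)) := by
    intro v s ε hsR hε hεgap hεa E hEmeas hEsub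
    have hsa : a < s := hsR.1
    have hsσ : s ≤ σ q := hsR.2
    have hsε0 : 0 ≤ s - ε := by linarith
    set S : Set ℝ := (fun θ => σ q + θ) ⁻¹' E with hSdef
    have hSmeas : MeasurableSet S := hEmeas.preimage (measurable_const.add measurable_id)
    have hSsub : S ⊆ Icc (-ηM) 0 := by
      intro θ hθ
      have h1 : σ q + θ ∈ Ioc (s - ε) s := hEsub hθ
      have h2 : σ q - ηM ≤ a := le_max_right _ _
      simp only [Set.mem_Ioc] at h1
      exact ⟨by linarith [h1.1], by linarith [h1.2]⟩
    set φ : ℝ → Fin d → ℝ := fun θ => Set.indicator S (fun _ => v) θ with hφdef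
    have hφmeas : Measurable φ := measurable_const.indicator hSmeas
    have hφK : ∀ t, euclNorm (φ t) ≤ euclNorm v := by
      intro t
      by_cases h : t ∈ S
      · simp [hφdef, Set.indicator_of_mem, h]
      · simp [hφdef, Set.indicator_of_notMem, h, euclNorm_zero, euclNorm_nonneg]
    have hφLp : MemLp φ p (volume.restrict (Icc (-ηM) 0)) := by
      refine MemLp.of_bound hφmeas.aestronglyMeasurable ‖v‖ ?_
      filter_upwards with θ
      exact norm_indicator_le_norm_self (fun _ => v) θ
    set z : ℝ → Fin d → ℝ := zAux η D φ e with hzdef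
    have hz : DelaySol d M η D ηM p z := by
      constructor
      · intro b
        set n : ℕ := ⌈b / e⌉₊ with hn
        have hfin : IsFiniteMeasure (volume.restrict (Icc (-ηM) b)) :=
          ⟨by rw [Measure.restrict_apply_univ]; exact measure_Icc_lt_top⟩
        have hbn : ∀ t ∈ Icc (-ηM) b, z t = solAux η D φ n t := fun t ht =>
          zAux_eq he heη (ht.2.trans (le_ceil_mul he b))
        have hzm : AEStronglyMeasurable z (volume.restrict (Icc (-ηM) b)) := by
          refine (solAux_measurable (η := η) hφmeas hDmeas n).aestronglyMeasurable.congr ?_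
          filter_upwards [self_mem_ae_restrict measurableSet_Icc] with t ht
          exact (hbn t ht).symm
        refine MemLp.of_bound hzm (euclNorm v * (1 + M * d ^ 2 * B) ^ n) ?_
        have hball := solAux_bound (euclNorm_nonneg v) hφK hB0 hDB n
          (η := η) (D := D) (φ := φ)
        filter_upwards [ae_restrict_of_ae hball, self_mem_ae_restrict measurableSet_Icc]
          with t hbd ht
        rw [hbn t ht]
        exact (pi_norm_le_euclNorm _).trans hbd
      · have h0 : ∀ᵐ t ∂(volume : Measure ℝ), t ≠ (0 : ℝ) := by
          rw [ae_iff]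
          have hset : {t : ℝ | ¬t ≠ 0} = {0} := by ext t; simp
          rw [hset]
          exact Real.volume_singleton
        filter_upwards [ae_restrict_of_ae h0, self_mem_ae_restrict measurableSet_Ici]
          with t ht0 ht
        exact zAux_spec he heη (lt_of_le_of_ne ht (Ne.symm ht0))
    have hz0 : z =ᵐ[volume.restrict (Icc (-ηM) 0)] φ := by
      filter_upwards [self_mem_ae_restrict measurableSet_Icc] with θ hθ
      exact zAux_nonpos hθ.2
    have hrepz := hrep φ hφLp z hz hz0
    have hsub1 : Ioc (s - ε) s ⊆ Ici (0 : ℝ) := fun t ht => le_of_lt (show (0:ℝ) < t by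
      have := ht.1; linarith)
    have hrep2 := ae_restrict_of_ae_restrict_of_subset hsub1 hrepz
    have hzE : (fun t => euclNorm (z t)) =ᵐ[volume.restrict (Ioc (s - ε) s)]
        Set.indicator E fun u => euclNorm ((Mq q u).mulVec v) := by
      filter_upwards [hrep2, self_mem_ae_restrict measurableSet_Ioc] with t hzt ht
      have hterm : ∀ q' : ℕ, q' ≠ q → (Mq q' t).mulVec (φ (t - σ q')) = 0 := by
        intro q' hq'
        have hφ0 : φ (t - σ q') = 0 := by
          refine Set.indicator_of_notMem ?_ _
          intro hmem
          have h1 : σ q + (t - σ q') ∈ Ioc (s - ε) s := hEsub hmem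
          simp only [Set.mem_Ioc] at h1
          rcases hgapsep q' hq' with h | h
          · linarith [h1.1, h1.2, ht.1, ht.2]
          · linarith [h1.1, h1.2, ht.1, ht.2]
        rw [hφ0, Matrix.mulVec_zero]
      rw [hzt, finsum_eq_single _ q hterm]
      by_cases htE : t ∈ E
      · have htS : t - σ q ∈ S := by
          simp only [hSdef, Set.mem_preimage]
          rw [show σ q + (t - σ q) = t by ring]
          exact htE
        rw [Set.indicator_of_mem htE]
        simp only [hφdef]
        rw [Set.indicator_of_mem htS]
      · have htS : t - σ q ∉ S := by
          simp only [hSdef, Set.mem_preimage]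
          rw [show σ q + (t - σ q) = t by ring]
          exact htE
        rw [Set.indicator_of_notMem htE]
        simp only [hφdef]
        rw [Set.indicator_of_notMem htS, Matrix.mulVec_zero, euclNorm_zero]
    have hgm : Measurable fun u => euclNorm ((Mq q u).mulVec v) := by
      apply measurable_euclNorm
      intro j
      have hj : (fun u => (Mq q u).mulVec v j) = fun u => ∑ l, Mq q u j l * v l := by
        funext u
        simp [Matrix.mulVec, dotProduct]
      rw [hj]
      exact Finset.measurable_sum _ fun l _ => ((hMqloc q).1 j l).mul measurable_const
    have hzsm : AEStronglyMeasurable (fun u => euclNorm (z u))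
        (volume.restrict (Ioc (s - ε) s)) :=
      ((hgm.indicator hEmeas).aestronglyMeasurable).congr hzE.symm
    have hpre : (fun θ : ℝ => σ q + θ) ⁻¹' Ioc (s - ε) s = Ioc (s - σ q - ε) (s - σ q) := by
      ext θ
      simp only [Set.mem_preimage, Set.mem_Ioc]
      constructor <;> intro h <;> exact ⟨by linarith [h.1], by linarith [h.2]⟩
    have hMP : MeasurePreserving (fun θ : ℝ => σ q + θ)
        (volume.restrict (Ioc (s - σ q - ε) (s - σ q))) (volume.restrict (Ioc (s - ε) s)) := by
      have := (measurePreserving_add_left (volume : Measure ℝ) (σ q)).restrict_preimage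
        (s := Ioc (s - ε) s) measurableSet_Ioc
      rwa [hpre] at this
    have hstep1 : eLpNorm (Set.indicator E fun u => euclNorm ((Mq q u).mulVec v)) p
        (volume.restrict (Ioc (s - ε) s))
        = eLpNorm (fun u => euclNorm ((Mq q u).mulVec v)) p (volume.restrict E) := by
      rw [eLpNorm_indicator_eq_eLpNorm_restrict hEmeas, Measure.restrict_restrict hEmeas,
        Set.inter_eq_left.2 hEsub]
    calc eLpNorm (fun u => euclNorm ((Mq q u).mulVec v)) p (volume.restrict E)
        = eLpNorm (fun t => euclNorm (z t)) p (volume.restrict (Ioc (s - ε) s)) := by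
          rw [← hstep1]
          exact (eLpNorm_congr_ae hzE).symm
      _ = eLpNorm ((fun t => euclNorm (z t)) ∘ fun θ => σ q + θ) p
            (volume.restrict (Ioc (s - σ q - ε) (s - σ q))) :=
          (eLpNorm_comp_measurePreserving hzsm hMP).symm
      _ ≤ eLpNorm (fun θ => euclNorm (z (σ q + θ))) p (volume.restrict (Icc (-ηM) 0)) := by
          refine eLpNorm_mono_measure _ (Measure.restrict_mono ?_ le_rfl)
          intro θ hθ
          have h2 : σ q - ηM ≤ a := le_max_right _ _
          exact ⟨by have := hθ.1; linarith, by have := hθ.2; linarith⟩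
      _ ≤ ENNReal.ofReal (C₀ * Real.exp (-γ * σ q)) *
            eLpNorm (fun θ => euclNorm (z θ)) p (volume.restrict (Icc (-ηM) 0)) :=
          hstab z hz (σ q) (hσnn q)
      _ = ENNReal.ofReal c * eLpNorm (Set.indicator S fun _ => euclNorm v) p
            (volume.restrict (Icc (-ηM) 0)) := by
          congr 1
          apply eLpNorm_congr_ae
          filter_upwards [self_mem_ae_restrict measurableSet_Icc] with θ hθ
          rw [hzdef, zAux_nonpos hθ.2]
          by_cases hθS : θ ∈ S
          · simp [hφdef, Set.indicator_of_mem hθS]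
          · simp [hφdef, Set.indicator_of_notMem hθS, euclNorm_zero]
      _ ≤ ENNReal.ofReal c * ((‖euclNorm v‖₊ : ℝ≥0∞) *
            (volume.restrict (Icc (-ηM) (0 : ℝ)) S) ^ (1 / p.toReal)) :=
          mul_le_mul_right (eLpNorm_indicator_const_le _ _) _
      _ = ENNReal.ofReal c * (ENNReal.ofReal (euclNorm v) * (volume E) ^ (1 / p.toReal)) := by
          rw [Measure.restrict_apply hSmeas, Set.inter_eq_left.2 hSsub,
            ← enorm_eq_nnnorm, Real.enorm_eq_ofReal (euclNorm_nonneg v), hSdef,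
            measure_preimage_add]
  -- partition of `R` into small intervals
  set δ : ℝ := min gap (σ q - a) with hδdef
  have hδpos : 0 < δ := lt_min hgappos (by linarith)
  set I : ℕ → Set ℝ :=
    fun k => Ioc (max a (σ q - (k + 1) * δ)) (max a (σ q - k * δ)) with hIdef
  have hImeas : ∀ k, MeasurableSet (I k) := fun k => measurableSet_Ioc
  have hIunion : (⋃ k, I k) = R := by
    ext u
    simp only [Set.mem_iUnion, hIdef, Set.mem_Ioc, hRdef]
    constructor
    · rintro ⟨k, h1, h2⟩
      refine ⟨lt_of_le_of_lt (le_max_left _ _) h1, h2.trans (max_le haσ.le ?_)⟩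
      have hk0 : (0 : ℝ) ≤ (k : ℝ) * δ := by positivity
      linarith
    · intro hu
      refine ⟨⌊(σ q - u) / δ⌋₊, ?_, ?_⟩
      · rw [max_lt_iff]
        refine ⟨hu.1, ?_⟩
        have h1 : (σ q - u) / δ < ⌊(σ q - u) / δ⌋₊ + 1 := Nat.lt_floor_add_one _
        have h2 := (div_lt_iff₀ hδpos).1 h1
        push_cast at h2 ⊢
        nlinarith
      · have h0 : 0 ≤ (σ q - u) / δ := div_nonneg (by linarith [hu.2]) hδpos.le
        have h1 : (⌊(σ q - u) / δ⌋₊ : ℝ) ≤ (σ q - u) / δ := Nat.floor_le h0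
        have h2 := (le_div_iff₀ hδpos).1 h1
        refine le_max_of_le_right ?_
        linarith
  have hIdisj : Pairwise (Function.onFun Disjoint I) := by
    have hmono : ∀ j k : ℕ, j < k → Disjoint (I j) (I k) := by
      intro j k hjk
      rw [hIdef]
      rw [Set.Ioc_disjoint_Ioc]
      refine (min_le_right _ _).trans ((max_le_max le_rfl ?_).trans (le_max_left _ _))
      have : ((j : ℝ) + 1) * δ ≤ (k : ℝ) * δ := by
        have : ((j : ℝ) + 1) ≤ (k : ℝ) := by exact_mod_cast hjk
        nlinarith
      linarith
    intro j k hjk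
    rcases hjk.lt_or_gt with h | h
    · exact hmono j k h
    · exact (hmono k j h).symm
  -- the key estimate on each piece of the partition
  have hpiece : ∀ (v : Fin d → ℝ) (k : ℕ) (E : Set ℝ), MeasurableSet E → E ⊆ I k →
      eLpNorm (fun u => euclNorm ((Mq q u).mulVec v)) p (volume.restrict E) ≤
        ENNReal.ofReal c *
          (ENNReal.ofReal (euclNorm v) * (volume E) ^ (1 / p.toReal)) := by
    intro v k E hEm hEsub
    by_cases hne : max a (σ q - (k + 1) * δ) < max a (σ q - k * δ)
    · set lo : ℝ := max a (σ q - (k + 1) * δ) with hlodef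
      set hi : ℝ := max a (σ q - k * δ) with hhidef
      have hloa : a ≤ lo := le_max_left _ _
      have hhia : a < hi := lt_of_le_of_lt hloa hne
      have hhival : hi = σ q - k * δ := by
        rcases max_choice a (σ q - k * δ) with h | h
        · rw [hhidef, h] at hhia ⊢; exact absurd hhia (lt_irrefl a)
        · rw [hhidef, h]
      have hhiσ : hi ≤ σ q := by
        rw [hhival]
        have : (0 : ℝ) ≤ (k : ℝ) * δ := by positivity
        linarith
      have hεle : hi - lo ≤ δ := by
        have h1 : σ q - (k + 1) * δ ≤ lo := le_max_right _ _
        rw [hhival]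
        push_cast at h1 ⊢
        nlinarith
      refine key v hi (hi - lo) ⟨hhia, hhiσ⟩ (by linarith) (hεle.trans (min_le_left _ _))
        (by linarith) E hEm ?_
      rw [show hi - (hi - lo) = lo by ring]
      exact hEsub
    · have hIem : I k = ∅ := by
        rw [hIdef]
        exact Set.Ioc_eq_empty hne
      have hEem : E = ∅ := Set.subset_empty_iff.1 (hIem ▸ hEsub)
      rw [hEem]
      simp only [Measure.restrict_empty]
      rw [eLpNorm_measure_zero]
      exact zero_le
  -- pointwise a.e. bound on `R` for a fixed vector `v`
  have hae_v : ∀ v : Fin d → ℝ, ∀ᵐ u ∂(volume.restrict R),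
      euclNorm ((Mq q u).mulVec v) ≤ c * euclNorm v := by
    intro v
    have hgm : Measurable fun u => euclNorm ((Mq q u).mulVec v) := by
      apply measurable_euclNorm
      intro j
      have hj : (fun u => (Mq q u).mulVec v j) = fun u => ∑ l, Mq q u j l * v l := by
        funext u
        simp [Matrix.mulVec, dotProduct]
      rw [hj]
      exact Finset.measurable_sum _ fun l _ => ((hMqloc q).1 j l).mul measurable_const
    have hcv0 : 0 ≤ c * euclNorm v := mul_nonneg hcpos.le (euclNorm_nonneg v)
    by_cases hptop : p = ∞
    · have hk : ∀ k : ℕ, ∀ᵐ u ∂(volume.restrict (I k)),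
          euclNorm ((Mq q u).mulVec v) ≤ c * euclNorm v := by
        intro k
        have h1 := hpiece v k (I k) (hImeas k) le_rfl
        rw [hptop] at h1
        simp only [ENNReal.toReal_top, div_zero, ENNReal.rpow_zero, mul_one] at h1
        rw [eLpNorm_exponent_top] at h1
        have h3 := ae_le_essSup
          (μ := volume.restrict (I k))
          (f := fun u => (‖euclNorm ((Mq q u).mulVec v)‖₊ : ℝ≥0∞))
        filter_upwards [h3] with u hu
        have h4 : (‖euclNorm ((Mq q u).mulVec v)‖₊ : ℝ≥0∞) ≤
            ENNReal.ofReal c * ENNReal.ofReal (euclNorm v) := hu.trans h1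
        rw [← enorm_eq_nnnorm, Real.enorm_eq_ofReal (euclNorm_nonneg _),
          ← ENNReal.ofReal_mul hcpos.le] at h4
        exact (ENNReal.ofReal_le_ofReal_iff hcv0).1 h4
      rw [← hIunion, ae_restrict_iUnion_iff]
      exact hk
    · have hp0 : p ≠ 0 := by
        intro h
        rw [h] at hp
        exact absurd hp (by simp)
      have hpr : 0 < p.toReal := ENNReal.toReal_pos hp0 hptop
      set cE : ℝ≥0∞ := ENNReal.ofReal c * ENNReal.ofReal (euclNorm v) with hcEdef
      have hmain : (fun u => (‖euclNorm ((Mq q u).mulVec v)‖₊ : ℝ≥0∞) ^ p.toReal)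
          ≤ᵐ[volume.restrict R] fun _ => cE ^ p.toReal := by
        apply ae_le_of_forall_setLIntegral_le_of_sigmaFinite
        · exact hgm.enorm.pow measurable_const
        · intro F hF _
          rw [setLIntegral_const]
          rw [Measure.restrict_restrict hF, Measure.restrict_apply hF]
          have hFR : F ∩ R = ⋃ k, F ∩ I k := by
            rw [← hIunion, Set.inter_iUnion]
          rw [hFR, lintegral_iUnion (fun k => hF.inter (hImeas k))
            (hIdisj.mono fun j k h => h.mono Set.inter_subset_right Set.inter_subset_right)]
          have hterm : ∀ k : ℕ, ∫⁻ u in F ∩ I k,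
              (‖euclNorm ((Mq q u).mulVec v)‖₊ : ℝ≥0∞) ^ p.toReal ∂volume ≤
              cE ^ p.toReal * volume (F ∩ I k) := by
            intro k
            have h1 := hpiece v k (F ∩ I k) (hF.inter (hImeas k)) Set.inter_subset_right
            rw [eLpNorm_eq_lintegral_rpow_enorm_toReal hp0 hptop] at h1
            have h2 := ENNReal.rpow_le_rpow h1 hpr.le
            rw [← ENNReal.rpow_mul, one_div_mul_cancel hpr.ne', ENNReal.rpow_one] at h2
            refine h2.trans ?_
            rw [ENNReal.mul_rpow_of_nonneg _ _ hpr.le, ENNReal.mul_rpow_of_nonneg _ _ hpr.le,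
              ← ENNReal.rpow_mul, one_div_mul_cancel hpr.ne', ENNReal.rpow_one, hcEdef,
              ENNReal.mul_rpow_of_nonneg _ _ hpr.le, mul_assoc]
          calc ∑' k, ∫⁻ u in F ∩ I k,
                (‖euclNorm ((Mq q u).mulVec v)‖₊ : ℝ≥0∞) ^ p.toReal ∂volume
              ≤ ∑' k, cE ^ p.toReal * volume (F ∩ I k) := ENNReal.tsum_le_tsum hterm
            _ = cE ^ p.toReal * ∑' k, volume (F ∩ I k) := ENNReal.tsum_mul_left
            _ = cE ^ p.toReal * volume (⋃ k, F ∩ I k) := by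
                rw [← measure_iUnion (fun j k h =>
                    (hIdisj h).mono Set.inter_subset_right Set.inter_subset_right)
                  (fun k => hF.inter (hImeas k))]
      filter_upwards [hmain] with u hu
      have h4 : (‖euclNorm ((Mq q u).mulVec v)‖₊ : ℝ≥0∞) ≤ cE :=
        (ENNReal.rpow_le_rpow_iff hpr).1 hu
      rw [← enorm_eq_nnnorm, Real.enorm_eq_ofReal (euclNorm_nonneg _), hcEdef,
        ← ENNReal.ofReal_mul hcpos.le] at h4
      exact (ENNReal.ofReal_le_ofReal_iff hcv0).1 h4
  -- upgrade to the spectral norm via a countable dense set of vectors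
  obtain ⟨W, hWc, hWd⟩ := TopologicalSpace.exists_countable_dense (Fin d → ℝ)
  have hWall : ∀ᵐ u ∂(volume.restrict R), ∀ v ∈ W,
      euclNorm ((Mq q u).mulVec v) ≤ c * euclNorm v :=
    (ae_ball_iff hWc).2 fun v _ => hae_v v
  have hspec : ∀ᵐ u ∂(volume.restrict R),
      specNorm (Mq q u) ≤ C₀ * Real.exp (-γ * u) := by
    filter_upwards [hWall, self_mem_ae_restrict measurableSet_Ioc] with u hu huR
    have hcontmv : Continuous fun v : Fin d → ℝ => (Mq q u).mulVec v := by
      refine continuous_pi fun k => ?_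
      have hk : (fun v : Fin d → ℝ => (Mq q u).mulVec v k)
          = fun v => ∑ l, Mq q u k l * v l := by
        funext v
        simp [Matrix.mulVec, dotProduct]
      rw [hk]
      exact continuous_finset_sum _ fun l _ => continuous_const.mul (continuous_apply l)
    have hclosed : IsClosed {v : Fin d → ℝ |
        euclNorm ((Mq q u).mulVec v) ≤ c * euclNorm v} :=
      isClosed_le (continuous_euclNorm.comp hcontmv) (continuous_const.mul continuous_euclNorm)
    have hall : ∀ v : Fin d → ℝ, euclNorm ((Mq q u).mulVec v) ≤ c * euclNorm v := by
      intro v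
      have hsub : closure W ⊆ {v : Fin d → ℝ |
          euclNorm ((Mq q u).mulVec v) ≤ c * euclNorm v} :=
        closure_minimal (fun w hw => hu w hw) hclosed
      exact hsub (by rw [hWd.closure_eq]; trivial)
    refine (specNorm_le_of_bound hcpos.le hall).trans ?_
    rw [hcdef]
    have : Real.exp (-γ * σ q) ≤ Real.exp (-γ * u) :=
      Real.exp_le_exp.2 (by nlinarith [huR.2])
    nlinarith [Real.exp_pos (-γ * u)]
  -- conclude, using that `Mq q` vanishes on `Ioi 0 \ R`
  have hoff : ∀ᵐ u ∂(volume.restrict (Ioi (0 : ℝ) \ R)),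
      specNorm (Mq q u) ≤ C₀ * Real.exp (-γ * u) := by
    have hRmeas : MeasurableSet R := hRdef ▸ measurableSet_Ioc
    filter_upwards [self_mem_ae_restrict (measurableSet_Ioi.diff hRmeas)] with u hu
    have h0 : Mq q u = 0 := by
      refine hMqsupp q u ?_
      intro hmem
      exact hu.2 ⟨max_lt_iff.2 ⟨hu.1, hmem.1⟩, hmem.2⟩
    rw [h0, specNorm_zero]
    positivity
  have hle : volume.restrict (Ioi (0 : ℝ)) ≤
      volume.restrict R + volume.restrict (Ioi (0 : ℝ) \ R) := by
    refine le_trans (Measure.restrict_mono (fun u hu => ?_) le_rfl)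
      (Measure.restrict_union_le _ _)
    by_cases h : u ∈ R
    · exact Or.inl h
    · exact Or.inr ⟨hu, h⟩
  have hsum : ∀ᵐ u ∂(volume.restrict R + volume.restrict (Ioi (0 : ℝ) \ R)),
      specNorm (Mq q u) ≤ C₀ * Real.exp (-γ * u) := by
    rw [ae_add_measure_iff]
    exact ⟨hspec, hoff⟩
  exact hsum.filter_mono (MeasureTheory.ae_mono hle)
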